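/- Let p ≥ 2, let N ≥ 2 and d ≥ 1 be integers, and let A be a real N×N matrix of rank d with all diagonal entries equal to 1. Then E_p(A) ≥ N(N−1) · ((N−d)/(d(N−1)))^{p/2}. -/

import Mathlib

open Finset RealInnerProductSpace

-- Step A: the projection-based trace inequality
theorem aux_trace_sq (N d : ℕ) (A : Matrix (Fin N) (Fin N) ℝ) (hrank : A.rank = d) :
    ∃ P : Matrix (Fin N) (Fin N) ℝ,
      (∀ i j, P i j = P j i) ∧ P * A = A ∧ P * P = P ∧ Matrix.trace P = (d : ℝ) := by
  classical
  set E := EuclideanSpace ℝ (Fin N)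
  set f : E →ₗ[ℝ] E := Matrix.toEuclideanLin A with hf
  set K : Submodule ℝ E := LinearMap.range f with hK
  set pr : E →ₗ[ℝ] E := K.subtype ∘ₗ (Submodule.orthogonalProjection K : E →L[ℝ] K).toLinearMap with hpr
  have hmem : ∀ x, pr x ∈ K := fun x => (Submodule.orthogonalProjection K x).2
  have hfix : ∀ x ∈ K, pr x = x := by
    intro x hx
    show K.starProjection x = x
    rw [Submodule.starProjection_eq_self_iff]
    exact hx
  set b : Module.Basis (Fin N) ℝ E := (EuclideanSpace.basisFun (Fin N) ℝ).toBasis with hb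
  have hAmat : LinearMap.toMatrix b b f = A := by
    rw [hf, Matrix.toEuclideanLin_eq_toLin_orthonormal]
    exact LinearMap.toMatrix_toLin _ _ _
  refine ⟨LinearMap.toMatrix b b pr, ?_, ?_, ?_, ?_⟩
  · intro i j
    have hPij : ∀ i j, LinearMap.toMatrix b b pr i j = pr (EuclideanSpace.single j 1) i := by
      intro i j
      rw [LinearMap.toMatrix_apply]
      rw [hb, OrthonormalBasis.coe_toBasis_repr_apply, OrthonormalBasis.coe_toBasis,
        EuclideanSpace.basisFun_apply, EuclideanSpace.basisFun_repr]
    rw [hPij, hPij]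
    have h1 : ∀ y : E, (⟪y, EuclideanSpace.single i (1:ℝ)⟫ : ℝ) = y i := by
      intro y; rw [EuclideanSpace.inner_single_right]; simp
    have h2 : ∀ y : E, (⟪EuclideanSpace.single j (1:ℝ), y⟫ : ℝ) = y j := by
      intro y; rw [EuclideanSpace.inner_single_left]; simp
    rw [← h1 (pr (EuclideanSpace.single j 1)), ← h2 (pr (EuclideanSpace.single i 1))]
    exact Submodule.inner_starProjection_left_eq_right K _ _
  · rw [← hAmat, ← LinearMap.toMatrix_comp b b b]
    congr 1
    exact LinearMap.ext fun x => hfix _ ⟨x, rfl⟩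
  · rw [← LinearMap.toMatrix_comp b b b]
    congr 1
    exact LinearMap.ext fun x => hfix _ (hmem x)
  · have hproj : LinearMap.IsProj K pr := ⟨hmem, hfix⟩
    have hKd : Module.finrank ℝ K = d := by
      rw [← hrank, Matrix.rank_eq_finrank_range_toLin A (PiLp.basisFun 2 ℝ (Fin N))
        (PiLp.basisFun 2 ℝ (Fin N))]
      congr 2
    rw [← LinearMap.trace_eq_matrix_trace ℝ b pr, hproj.trace, hKd]


/-- For `p ≥ 2` and any real `N × N` matrix `A` of rank `d`, `N ≥ 2`, with unit diagonal
entries, `E_p(A) ≥ N(N-1) ((N-d)/(d(N-1)))^{p/2}`. -/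
theorem pFrameEnergy_welch_bound (N d : ℕ) (hN : 2 ≤ N) (hd : 1 ≤ d)
    (p : ℝ) (hp : 2 ≤ p)
    (A : Matrix (Fin N) (Fin N) ℝ) (hrank : A.rank = d) (hdiag : ∀ i, A i i = 1) :
    (N : ℝ) * ((N : ℝ) - 1) *
        (((N : ℝ) - (d : ℝ)) / ((d : ℝ) * ((N : ℝ) - 1))) ^ (p / 2) ≤
      ∑ i, ∑ j, if i = j then 0 else |A i j| ^ p := by
  classical
  obtain ⟨P, hsym, hPA, hPP, htr⟩ := aux_trace_sq N d A hrank
  have hdN : d ≤ N := by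
    have h := Matrix.rank_le_card_width A
    simpa [hrank] using h
  have hNR : (2:ℝ) ≤ (N:ℝ) := by exact_mod_cast hN
  have hdR : (1:ℝ) ≤ (d:ℝ) := by exact_mod_cast hd
  have hdNR : (d:ℝ) ≤ (N:ℝ) := by exact_mod_cast hdN
  have hN1 : (0:ℝ) < (N:ℝ) - 1 := by linarith
  have hdpos : (0:ℝ) < (d:ℝ) := by linarith
  -- conversion of off-diagonal double sums
  have hoffset : Finset.univ.offDiag =
      (Finset.univ ×ˢ Finset.univ).filter (fun x : Fin N × Fin N => x.1 ≠ x.2) := by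
    ext x; simp [Finset.mem_offDiag]
  have hoff : ∀ g : Fin N → Fin N → ℝ,
      ∑ x ∈ Finset.univ.offDiag, g x.1 x.2 = ∑ i, ∑ j, if i = j then 0 else g i j := by
    intro g
    rw [hoffset, Finset.sum_filter, Finset.sum_product]
    simp only [ite_not]
  set s : Finset (Fin N × Fin N) := Finset.univ.offDiag with hs
  set S : ℝ := ∑ x ∈ s, (A x.1 x.2) ^ 2 with hS
  -- trace identity : tr (P * A) = N
  have htrPA : ∑ x : Fin N × Fin N, P x.1 x.2 * A x.2 x.1 = (N:ℝ) := by
    rw [Fintype.sum_prod_type]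
    have : ∀ i : Fin N, ∑ j, P i j * A j i = A i i := fun i => by
      have := congrFun (congrFun hPA i) i
      simpa [Matrix.mul_apply] using this
    simp [this, hdiag]
  -- Frobenius norm of P is d
  have hPfro : ∑ x : Fin N × Fin N, (P x.1 x.2) ^ 2 = (d:ℝ) := by
    rw [Fintype.sum_prod_type]
    have h1 : ∀ i : Fin N, ∑ j, P i j * P j i = P i i := fun i => by
      have := congrFun (congrFun hPP i) i
      simpa [Matrix.mul_apply] using this
    calc ∑ i, ∑ j, P i j ^ 2 = ∑ i, ∑ j, P i j * P j i := by
          apply Finset.sum_congr rfl; intro i _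
          apply Finset.sum_congr rfl; intro j _
          rw [sq, ← hsym i j]
      _ = ∑ i, P i i := by simp [h1]
      _ = (d:ℝ) := htr
  -- Cauchy-Schwarz
  have hCS : (N:ℝ)^2 ≤ (d:ℝ) * ∑ i, ∑ j, (A i j)^2 := by
    have h := Finset.sum_mul_sq_le_sq_mul_sq Finset.univ
      (fun x : Fin N × Fin N => P x.1 x.2) (fun x : Fin N × Fin N => A x.2 x.1)
    rw [htrPA, hPfro] at h
    have h2 : ∑ x : Fin N × Fin N, (A x.2 x.1)^2 = ∑ i, ∑ j, (A i j)^2 := by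
      rw [Fintype.sum_prod_type, Finset.sum_comm]
    rwa [h2] at h
  -- split diagonal
  have hT : ∑ i, ∑ j, (A i j)^2 = (N:ℝ) + S := by
    have hrow : ∀ i : Fin N, ∑ j, (A i j)^2
        = (A i i)^2 + ∑ j, (if i = j then 0 else (A i j)^2) := by
      intro i
      have h1 : ∑ j, (if i = j then (A i j)^2 else 0) = (A i i)^2 := by simp
      rw [← h1, ← Finset.sum_add_distrib]
      apply Finset.sum_congr rfl; intro j _
      by_cases h : i = j <;> simp [h]
    have hoffA : ∑ x ∈ s, A x.1 x.2 ^ 2 = ∑ i, ∑ j, if i = j then 0 else A i j ^ 2 :=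
      hoff (fun i j => A i j ^ 2)
    rw [hS, hoffA]
    simp only [hrow, hdiag]
    rw [Finset.sum_add_distrib]
    simp
  have hSlb : (N:ℝ) * ((N:ℝ) - (d:ℝ)) / (d:ℝ) ≤ S := by
    rw [hT] at hCS
    rw [div_le_iff₀ hdpos]
    nlinarith
  have hS0 : 0 ≤ S := Finset.sum_nonneg fun x _ => sq_nonneg _
  -- cardinality
  have hle : N ≤ N * N := Nat.le_mul_of_pos_left N (by omega)
  have hcard : s.card = N * N - N := by
    rw [hs, Finset.offDiag_card, Finset.card_univ, Fintype.card_fin]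
  have hn : (s.card : ℝ) = (N:ℝ) * ((N:ℝ) - 1) := by
    rw [hcard]
    push_cast [Nat.cast_sub hle]
    ring
  set nR : ℝ := (N:ℝ) * ((N:ℝ) - 1) with hnR
  have hnRpos : 0 < nR := by rw [hnR]; positivity
  -- Jensen
  set q : ℝ := p / 2 with hq
  have hq1 : 1 ≤ q := by rw [hq]; linarith
  have hq0 : 0 ≤ q := by linarith
  have hjen := Real.rpow_arith_mean_le_arith_mean_rpow s (fun _ => 1 / nR)
    (fun x => (A x.1 x.2)^2) (fun _ _ => by positivity)
    (by rw [Finset.sum_const, nsmul_eq_mul, hn]; field_simp)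
    (fun x _ => sq_nonneg _) hq1
  have hlhs : ∑ x ∈ s, (1 / nR) * (A x.1 x.2)^2 = S / nR := by
    rw [← Finset.mul_sum, hS]; ring
  have hrhs : ∑ x ∈ s, (1 / nR) * ((A x.1 x.2)^2) ^ q
      = (1 / nR) * ∑ x ∈ s, ((A x.1 x.2)^2) ^ q := by
    rw [Finset.mul_sum]
  rw [hlhs, hrhs] at hjen
  have hjen2 : nR * (S / nR) ^ q ≤ ∑ x ∈ s, ((A x.1 x.2)^2) ^ q := by
    have := mul_le_mul_of_nonneg_left hjen (le_of_lt hnRpos)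
    rw [← mul_assoc] at this
    field_simp at this ⊢
    linarith
  set t : ℝ := ((N:ℝ) - (d:ℝ)) / ((d:ℝ) * ((N:ℝ) - 1)) with ht
  have ht0 : 0 ≤ t := by
    rw [ht]; apply div_nonneg (by linarith) (by positivity)
  have htS : t ≤ S / nR := by
    rw [le_div_iff₀ hnRpos]
    have heq : t * nR = (N:ℝ) * ((N:ℝ) - (d:ℝ)) / (d:ℝ) := by
      rw [ht, hnR]; field_simp
    rw [heq]; exact hSlb
  have hmono : nR * t ^ q ≤ nR * (S / nR) ^ q :=
    mul_le_mul_of_nonneg_left (Real.rpow_le_rpow ht0 htS hq0) (le_of_lt hnRpos)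
  -- convert goal
  have hgoal : ∑ i, ∑ j, (if i = j then 0 else |A i j| ^ p)
      = ∑ x ∈ s, ((A x.1 x.2)^2) ^ q := by
    have hoffB : ∑ x ∈ s, |A x.1 x.2| ^ p = ∑ i, ∑ j, if i = j then 0 else |A i j| ^ p :=
      hoff (fun i j => |A i j| ^ p)
    rw [← hoffB]
    apply Finset.sum_congr rfl
    intro x _
    rw [← sq_abs, ← Real.rpow_natCast |A x.1 x.2| 2, ← Real.rpow_mul (abs_nonneg _)]
    congr 1; ring
  rw [hgoal]
  calc nR * t ^ q ≤ nR * (S / nR) ^ q := hmono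
    _ ≤ _ := hjen2
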